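/- In PG(3,q) with q a prime power, an ovoid (a set of q² + 1 points no three of which are collinear) shows m_q^{(1)}(4, 2) ≥ q² + 1: there exists a set of q² + 1 points in PG(3,q) such that every line contains at most 2 of them. -/

import Mathlib

open Module Submodule

namespace Stmt12Aux

variable {F : Type*} [Field F]

/-- The affine point of the elliptic quadric with parameters `(x, y)`. -/
def vv (b c x y : F) : Fin 4 → F := ![x, y, x^2 + b*x*y + c*y^2, 1]

/-- The point at infinity. -/
def wv (F : Type*) [Field F] : Fin 4 → F := ![0, 0, 1, 0]

lemma exists_irr [Fintype F] : ∃ b c : F, ∀ t : F, t^2 + b*t + c ≠ 0 := by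
  by_contra h
  push_neg at h
  set ψ : F × F → F × F := fun q => (q.2, -(q.1^2 + q.2*q.1)) with hψ
  have hsurj : Function.Surjective ψ := by
    rintro ⟨b, c⟩
    obtain ⟨t, ht⟩ := h b c
    exact ⟨(t, b), by simp [hψ]; linear_combination -ht⟩
  have hinj : Function.Injective ψ := Finite.injective_iff_surjective.2 hsurj
  have : ((0 : F), (1 : F)) = ((-1 : F), (1 : F)) := by
    apply hinj
    simp only [hψ]
    norm_num
  have h0 : (0 : F) = -1 := congrArg Prod.fst this
  exact one_ne_zero (α := F) (by linear_combination h0)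

lemma aniso {b c : F} (hirr : ∀ t : F, t^2 + b*t + c ≠ 0) {x y : F}
    (h : x^2 + b*x*y + c*y^2 = 0) : x = 0 ∧ y = 0 := by
  by_cases hy : y = 0
  · subst hy
    refine ⟨?_, rfl⟩
    have : x^2 = 0 := by linear_combination h
    exact pow_eq_zero_iff (n := 2) (by norm_num) |>.mp this
  · exact absurd (by field_simp; linear_combination h) (hirr (x/y))

lemma vv_ne_zero (b c x y : F) : vv b c x y ≠ 0 := by
  intro h
  have := congrFun h 3
  simp [vv] at this

lemma wv_ne_zero : wv F ≠ 0 := by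
  intro h
  have := congrFun h 2
  simp [wv] at this

lemma pair_indep {b c x1 y1 x2 y2 : F} (hne : ¬(x1 = x2 ∧ y1 = y2)) :
    LinearIndependent F ![vv b c x1 y1, vv b c x2 y2] := by
  rw [LinearIndependent.pair_iff]
  intro s t hst
  have h3 := congrFun hst 3
  have h0 := congrFun hst 0
  have h1 := congrFun hst 1
  simp [vv] at h3 h0 h1
  by_cases hs : s = 0
  · subst hs
    simp at h3
    exact ⟨rfl, h3⟩
  · exfalso
    apply hne
    have ht : t = -s := by linear_combination h3
    subst ht
    have hx : s * (x1 - x2) = 0 := by linear_combination h0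
    have hy : s * (y1 - y2) = 0 := by linear_combination h1
    exact ⟨sub_eq_zero.mp ((mul_eq_zero.mp hx).resolve_left hs),
      sub_eq_zero.mp ((mul_eq_zero.mp hy).resolve_left hs)⟩

lemma range_pair {α : Type*} (u v : α) : Set.range ![u, v] = {u, v} := by
  ext z
  simp [Fin.exists_fin_two]
  tauto

lemma span_pair_eq {b c x1 y1 x2 y2 : F} {S : Submodule F (Fin 4 → F)}
    (h1 : vv b c x1 y1 ∈ S) (h2 : vv b c x2 y2 ∈ S)
    (hne : ¬(x1 = x2 ∧ y1 = y2)) (hS : finrank F S = 2) :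
    span F {vv b c x1 y1, vv b c x2 y2} = S := by
  apply eq_of_le_of_finrank_eq
  · rw [span_le]
    rintro z (rfl | rfl)
    · exact h1
    · exact h2
  · have h := finrank_span_eq_card (pair_indep (b := b) (c := c) hne)
    rw [range_pair] at h
    rw [hS, h, Fintype.card_fin]

lemma case3 {b c : F} (hirr : ∀ t : F, t^2 + b*t + c ≠ 0)
    {x1 y1 x2 y2 x3 y3 : F} {S : Submodule F (Fin 4 → F)}
    (hS : finrank F S = 2)
    (h1 : vv b c x1 y1 ∈ S) (h2 : vv b c x2 y2 ∈ S) (h3 : vv b c x3 y3 ∈ S)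
    (hne12 : ¬(x1 = x2 ∧ y1 = y2)) (hne13 : ¬(x1 = x3 ∧ y1 = y3))
    (hne23 : ¬(x2 = x3 ∧ y2 = y3)) : False := by
  have hsp := span_pair_eq h1 h2 hne12 hS
  rw [← hsp, mem_span_pair] at h3
  obtain ⟨a, a', hab⟩ := h3
  have e3 := congrFun hab 3
  have e0 := congrFun hab 0
  have e1 := congrFun hab 1
  have e2 := congrFun hab 2
  simp [vv] at e3 e0 e1 e2
  have hb' : a' = 1 - a := by linear_combination e3
  subst hb'
  rw [← e0, ← e1] at e2
  have key : a * (a - 1) * ((x1 - x2)^2 + b*(x1 - x2)*(y1 - y2) + c*(y1 - y2)^2) = 0 := by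
    linear_combination -e2
  rcases mul_eq_zero.mp key with h | h
  · rcases mul_eq_zero.mp h with h | h
    · subst h
      exact hne23 ⟨by linear_combination e0, by linear_combination e1⟩
    · have ha : a = 1 := by linear_combination h
      subst ha
      exact hne13 ⟨by linear_combination e0, by linear_combination e1⟩
  · obtain ⟨hx, hy⟩ := aniso hirr h
    exact hne12 ⟨by linear_combination hx, by linear_combination hy⟩

lemma casew {b c : F} {x1 y1 x2 y2 : F} {S : Submodule F (Fin 4 → F)}
    (hS : finrank F S = 2)
    (h1 : vv b c x1 y1 ∈ S) (h2 : vv b c x2 y2 ∈ S) (hw : wv F ∈ S)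
    (hne12 : ¬(x1 = x2 ∧ y1 = y2)) : False := by
  have hsp := span_pair_eq h1 h2 hne12 hS
  rw [← hsp, mem_span_pair] at hw
  obtain ⟨a, a', hab⟩ := hw
  have e3 := congrFun hab 3
  have e0 := congrFun hab 0
  have e1 := congrFun hab 1
  have e2 := congrFun hab 2
  simp [vv, wv] at e3 e0 e1 e2
  have hb' : a' = -a := by linear_combination e3
  subst hb'
  by_cases ha : a = 0
  · subst ha
    simp at e2
  · apply hne12
    have hx : a * (x1 - x2) = 0 := by linear_combination e0
    have hy : a * (y1 - y2) = 0 := by linear_combination e1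
    exact ⟨sub_eq_zero.mp ((mul_eq_zero.mp hx).resolve_left ha),
      sub_eq_zero.mp ((mul_eq_zero.mp hy).resolve_left ha)⟩

lemma span_v_inj {b c x y x' y' : F}
    (h : span F {vv b c x y} = span F {vv b c x' y'}) : x = x' ∧ y = y' := by
  have hm : vv b c x' y' ∈ span F {vv b c x y} := by
    rw [h]; exact mem_span_singleton_self _
  obtain ⟨a, ha⟩ := mem_span_singleton.1 hm
  have e3 := congrFun ha 3
  have e0 := congrFun ha 0
  have e1 := congrFun ha 1
  simp [vv] at e3 e0 e1
  subst e3
  simp at e0 e1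
  exact ⟨e0, e1⟩

lemma span_w_ne {b c x y : F} : span F {wv F} ≠ span F {vv b c x y} := by
  intro h
  have hm : vv b c x y ∈ span F {wv F} := by
    rw [h]; exact mem_span_singleton_self _
  obtain ⟨a, ha⟩ := mem_span_singleton.1 hm
  have e3 := congrFun ha 3
  simp [vv, wv] at e3

end Stmt12Aux

open Stmt12Aux in
/-- Existence of an ovoid/cap of size `q² + 1` in `PG(3,q)`: a set of `q² + 1` points
(one-dimensional subspaces of `F_q^4`) such that every line (2-dimensional linear subspace)
contains at most 2 of them; hence `m_q^{(1)}(4,2) ≥ q² + 1`. -/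
theorem stmt12 {F : Type*} [Field F] [Fintype F] :
    ∃ A : Set (Submodule F (Fin 4 → F)),
      (∀ P ∈ A, finrank F P = 1) ∧
      A.ncard = (Fintype.card F) ^ 2 + 1 ∧
      ∀ S : Submodule F (Fin 4 → F), finrank F S = 2 →
        {P ∈ A | P ≤ S}.ncard ≤ 2 := by
  obtain ⟨b, c, hirr⟩ := Stmt12Aux.exists_irr (F := F)
  refine ⟨(Set.range fun p : F × F => Submodule.span F {vv b c p.1 p.2}) ∪
      {Submodule.span F {wv F}}, ?_, ?_, ?_⟩
  · rintro P (⟨p, rfl⟩ | rfl)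
    · exact finrank_span_singleton (vv_ne_zero b c p.1 p.2)
    · exact finrank_span_singleton wv_ne_zero
  · have hdis : Disjoint (Set.range fun p : F × F => Submodule.span F {vv b c p.1 p.2})
        {Submodule.span F {wv F}} := by
      rw [Set.disjoint_singleton_right]
      rintro ⟨p, hp⟩
      exact span_w_ne hp.symm
    have hinj : Function.Injective fun p : F × F => Submodule.span F {vv b c p.1 p.2} := by
      intro p q h
      obtain ⟨h1, h2⟩ := span_v_inj h
      exact Prod.ext h1 h2
    rw [Set.ncard_union_eq hdis (Set.finite_range _) (Set.finite_singleton _),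
      ← Set.image_univ, Set.ncard_image_of_injective _ hinj, Set.ncard_univ,
      Nat.card_eq_fintype_card, Fintype.card_prod, Set.ncard_singleton, sq]
  · intro S hS
    by_contra hle
    push_neg at hle
    obtain ⟨t, hts, htc⟩ := Set.exists_subset_card_eq hle
    rw [Set.ncard_eq_three] at htc
    obtain ⟨P1, P2, P3, h12, h13, h23, rfl⟩ := htc
    have key : ∀ P, P ∈ ({P1, P2, P3} : Set (Submodule F (Fin 4 → F))) →
        (∃ p : F × F, P = Submodule.span F {vv b c p.1 p.2} ∧ vv b c p.1 p.2 ∈ S) ∨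
        (P = Submodule.span F {wv F} ∧ wv F ∈ S) := by
      intro P hP
      obtain ⟨hA, hPS⟩ := hts hP
      rcases hA with ⟨p, hp⟩ | hw
      · refine Or.inl ⟨p, hp.symm, ?_⟩
        rw [← hp] at hPS
        exact hPS (Submodule.mem_span_singleton_self _)
      · rw [Set.mem_singleton_iff] at hw
        refine Or.inr ⟨hw, ?_⟩
        rw [hw] at hPS
        exact hPS (Submodule.mem_span_singleton_self _)
    rcases key P1 (by simp) with ⟨p1, hp1, hv1⟩ | ⟨hw1, hwS1⟩ <;>
      rcases key P2 (by simp) with ⟨p2, hp2, hv2⟩ | ⟨hw2, hwS2⟩ <;>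
      rcases key P3 (by simp) with ⟨p3, hp3, hv3⟩ | ⟨hw3, hwS3⟩
    · -- v v v
      refine case3 hirr hS hv1 hv2 hv3 ?_ ?_ ?_
      · rintro ⟨hx, hy⟩; exact h12 (by rw [hp1, hp2, hx, hy])
      · rintro ⟨hx, hy⟩; exact h13 (by rw [hp1, hp3, hx, hy])
      · rintro ⟨hx, hy⟩; exact h23 (by rw [hp2, hp3, hx, hy])
    · -- v v w
      refine casew hS hv1 hv2 hwS3 ?_
      rintro ⟨hx, hy⟩; exact h12 (by rw [hp1, hp2, hx, hy])
    · -- v w v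
      refine casew hS hv1 hv3 hwS2 ?_
      rintro ⟨hx, hy⟩; exact h13 (by rw [hp1, hp3, hx, hy])
    · exact h23 (hw2.trans hw3.symm)
    · -- w v v
      refine casew hS hv2 hv3 hwS1 ?_
      rintro ⟨hx, hy⟩; exact h23 (by rw [hp2, hp3, hx, hy])
    · exact h13 (hw1.trans hw3.symm)
    · exact h12 (hw1.trans hw2.symm)
    · exact h12 (hw1.trans hw2.symm)
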